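/- arXiv:math/9405203 — 2 statements merged into one kernel-verified Lean document; each statement's English description precedes it below -/
import Mathlib

section
/- The meager downward-closed sets form a prime ideal in the lattice of downward-closed subsets of [ω]^ω: if X and Y are downward-closed subsets of [ω]^ω and X ∩ Y is meager (as a subset of 2^ω), then X is meager or Y is meager. -/
open Set Cardinal MeasureTheory

/-- The characteristic function of a set of naturals, as a point of Cantor space `2^ω`. -/
noncomputable def chi (x : Set ℕ) : ℕ → Bool := fun n => @decide (n ∈ x) (Classical.dec _)

/-- `[ω]^ω`: the collection of infinite subsets of ω. -/
def InfSets : Set (Set ℕ) := {x : Set ℕ | x.Infinite}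

/-- `X ⊆ [ω]^ω` is downward closed for almost-inclusion `x ≤ y ↔ (x \ y).Finite`. -/
def DownClosed (X : Set (Set ℕ)) : Prop :=
  ∀ y ∈ X, ∀ x : Set ℕ, x.Infinite → (x \ y).Finite → x ∈ X

/-- `X` is meager as a subset of Cantor space `2^ω` (product topology on `ℕ → Bool`). -/
def MeagerSet (X : Set (Set ℕ)) : Prop := IsMeagre (chi '' X)

/-- A partition of ω into consecutive finite intervals `I n = [e n, e (n+1))`. -/
structure IntervalPartition where
  e : ℕ → ℕ
  zero : e 0 = 0
  mono : StrictMono e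

/-- The `n`-th interval of an interval partition. -/
def IntervalPartition.I (P : IntervalPartition) (n : ℕ) : Set ℕ :=
  Set.Ico (P.e n) (P.e (n + 1))

/-- `X ⊆ [ω]^ω` is groupwise dense: downward closed, and for every partition of ω into
finite intervals, the union of some infinitely many of the intervals belongs to `X`. -/
def GroupwiseDense (X : Set (Set ℕ)) : Prop :=
  X ⊆ InfSets ∧ DownClosed X ∧
    ∀ P : IntervalPartition, ∃ A : Set ℕ, A.Infinite ∧ (⋃ n ∈ A, P.I n) ∈ X

/-- `g` eventually majorizes `f`. -/
def EvMaj (f g : ℕ → ℕ) : Prop := ∀ᶠ k in Filter.atTop, f k ≤ g k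

/-- `M(Π)`: the infinite subsets of ω including only finitely many intervals of `Π`. -/
def MSet (P : IntervalPartition) : Set (Set ℕ) :=
  {x : Set ℕ | x.Infinite ∧ {n : ℕ | P.I n ⊆ x}.Finite}

/-- The index `n` of the interval `I n` of `P` containing `k`. -/
def idx (P : IntervalPartition) (k : ℕ) : ℕ := Nat.findGreatest (fun n => P.e n ≤ k) k

/-- `F_Π(k)`: the largest element of `I (n+2)`, where `k ∈ I n`. -/
def FPart (P : IntervalPartition) (k : ℕ) : ℕ := P.e (idx P k + 3) - 1

/-- The groupwise density number 𝔤. -/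
noncomputable def gNum : Cardinal :=
  sInf {c : Cardinal | ∃ S : Set (Set (Set ℕ)), (∀ G ∈ S, GroupwiseDense G) ∧
    #S = c ∧ InfSets ∩ ⋂₀ S = ∅}

/-- The bounding number 𝔟. -/
noncomputable def bNum : Cardinal :=
  sInf {c : Cardinal | ∃ F : Set (ℕ → ℕ), #F = c ∧ ∀ g : ℕ → ℕ, ∃ f ∈ F, ¬ EvMaj f g}

/-- The dominating number 𝔡. -/
noncomputable def dNum : Cardinal :=
  sInf {c : Cardinal | ∃ F : Set (ℕ → ℕ), #F = c ∧ ∀ g : ℕ → ℕ, ∃ f ∈ F, EvMaj g f}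

/-- `B_M`: the ideal of meager downward-closed subsets of `[ω]^ω`. -/
def BM : Set (Set (Set ℕ)) := {X : Set (Set ℕ) | X ⊆ InfSets ∧ DownClosed X ∧ MeagerSet X}

/-- `add(B_M)`. -/
noncomputable def addBM : Cardinal :=
  sInf {c : Cardinal | ∃ S : Set (Set (Set ℕ)), S ⊆ BM ∧ #S = c ∧ ⋃₀ S ∉ BM}

/-- `cov(B_M)`. -/
noncomputable def covBM : Cardinal :=
  sInf {c : Cardinal | ∃ S : Set (Set (Set ℕ)), S ⊆ BM ∧ #S = c ∧
    {x : Set ℕ | x.Infinite ∧ xᶜ.Infinite} ⊆ ⋃₀ S}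

/-- `unif(B_M)`. -/
noncomputable def unifBM : Cardinal :=
  sInf {c : Cardinal | ∃ S : Set (Set ℕ), (∀ x ∈ S, x.Infinite ∧ xᶜ.Infinite) ∧ #S = c ∧
    ∀ X ∈ BM, ¬ S ⊆ X}

/-- `cof(B_M)`. -/
noncomputable def cofBM : Cardinal :=
  sInf {c : Cardinal | ∃ C : Set (Set (Set ℕ)), C ⊆ BM ∧ #C = c ∧
    ∀ X ∈ BM, ∃ Y ∈ C, X ⊆ Y}

/-- `X ⊆ [ω]^ω` is dense: every infinite `A` has an infinite subset `B ∈ X`. -/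
def DenseM (X : Set (Set ℕ)) : Prop :=
  ∀ A : Set ℕ, A.Infinite → ∃ B ⊆ A, B.Infinite ∧ B ∈ X

/-- 𝔤′: the least number of non-meager downward-closed ideals on ω with empty intersection. -/
noncomputable def gNum' : Cardinal :=
  sInf {c : Cardinal | ∃ S : Set (Set (Set ℕ)),
    (∀ X ∈ S, X ⊆ InfSets ∧ DownClosed X ∧ (∀ x ∈ X, ∀ y ∈ X, x ∪ y ∈ X) ∧ ¬ MeagerSet X) ∧
    #S = c ∧ InfSets ∩ ⋂₀ S = ∅}

/-- The splitting number 𝔰. -/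
noncomputable def sNum : Cardinal :=
  sInf {c : Cardinal | ∃ S : Set (Set ℕ), #S = c ∧
    ∀ x : Set ℕ, x.Infinite → ∃ y ∈ S, (x ∩ y).Infinite ∧ (x \ y).Infinite}

section AuxPrime
lemma chi_eq_true {x : Set ℕ} {k : ℕ} : chi x k = true ↔ k ∈ x := by
  simp [chi]

def cylSet (M : ℕ) (t : ℕ → Bool) : Set (ℕ → Bool) := {f | ∀ k < M, f k = t k}

lemma isOpen_cylSet (M : ℕ) (t : ℕ → Bool) : IsOpen (cylSet M t) := by
  have : cylSet M t = ⋂ k ∈ Finset.range M, (fun f : ℕ → Bool => f k) ⁻¹' {t k} := by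
    ext f; simp [cylSet]
  rw [this]
  exact isOpen_biInter_finset fun k _ =>
    (continuous_apply k).isOpen_preimage _ (isOpen_discrete _)

lemma closed_nwd_union {X : Type*} [TopologicalSpace X] {s t : Set X} (hs : IsClosed s)
    (hsi : interior s = ∅) (hti : interior t = ∅) : interior (s ∪ t) = ∅ := by
  have h1 : interior (s ∪ t) \ s ⊆ interior t := by
    refine interior_maximal ?_ (isOpen_interior.sdiff hs)
    intro f hf
    rcases interior_subset hf.1 with h | h
    · exact (hf.2 h).elim
    · exact h
  rw [hti, Set.subset_empty_iff, Set.diff_eq_empty] at h1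
  have h2 := interior_maximal h1 isOpen_interior
  rw [hsi] at h2
  exact Set.subset_empty_iff.mp h2

lemma exists_avoid {F : Set (ℕ → Bool)} (hF : IsClosed F) (hI : interior F = ∅)
    (N : ℕ) (t : ℕ → Bool) :
    ∃ M, ∃ t' : ℕ → Bool, N < M ∧ (∀ k < N, t' k = t k) ∧ cylSet M t' ∩ F = ∅ := by
  have hdense : Dense Fᶜ := by
    rw [dense_iff_closure_eq, closure_compl, hI, Set.compl_empty]
  obtain ⟨g, hgc, hgcyl⟩ := hdense.exists_mem_open (isOpen_cylSet N t)
    ⟨t, fun k _ => rfl⟩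
  obtain ⟨I, u, hu, hpi⟩ := isOpen_pi_iff.mp hF.isOpen_compl g hgc
  refine ⟨max (N + 1) (I.sup Nat.succ), g, lt_of_lt_of_le (Nat.lt_succ_self N) (le_max_left _ _),
    fun k hk => hgcyl k hk, ?_⟩
  rw [Set.eq_empty_iff_forall_notMem]
  rintro f ⟨hf1, hf2⟩
  have : f ∈ (↑I : Set ℕ).pi u := by
    intro a ha
    have haM : a < max (N + 1) (I.sup Nat.succ) :=
      lt_of_lt_of_le (Nat.lt_succ_self a) (le_trans (Finset.le_sup ha) (le_max_right _ _))
    rw [hf1 a haM]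
    exact (hu a ha).2
  exact hpi this hf2

lemma interval_nonempty (P : IntervalPartition) (n : ℕ) : P.e n ∈ P.I n :=
  ⟨le_refl _, P.mono (Nat.lt_succ_self n)⟩

lemma infinite_of_unbounded {s : Set ℕ} (h : ∀ N : ℕ, ∃ k ∈ s, N ≤ k) : s.Infinite := by
  intro hfin
  obtain ⟨b, hb⟩ := hfin.bddAbove
  obtain ⟨k, hk, hkb⟩ := h (b + 1)
  exact absurd (hb hk) (by omega)

lemma meagerSet_of_finite_intervals {X : Set (Set ℕ)} (P : IntervalPartition)
    (h : ∀ x ∈ X, {n | P.I n ⊆ x}.Finite) : MeagerSet X := by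
  classical
  set D : ℕ → Set (ℕ → Bool) := fun N => {f | ∀ n, N ≤ n → ∃ k ∈ P.I n, f k = false} with hD
  have hclosed : ∀ N, IsClosed (D N) := by
    intro N
    have : D N = ⋂ n ∈ {n | N ≤ n}, ⋃ k ∈ P.I n, {f : ℕ → Bool | f k = false} := by
      ext f; simp [hD]
    rw [this]
    refine isClosed_biInter fun n _ => ?_
    refine (Set.finite_Ico _ _).isClosed_biUnion fun k _ => ?_
    have : {f : ℕ → Bool | f k = false} = (fun f : ℕ → Bool => f k) ⁻¹' {false} := rfl
    rw [this]
    exact (isClosed_discrete _).preimage (continuous_apply k)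
  have hint : ∀ N, interior (D N) = ∅ := by
    intro N
    rw [Set.eq_empty_iff_forall_notMem]
    intro f hf
    obtain ⟨I, u, hu, hpi⟩ := isOpen_pi_iff.mp isOpen_interior f hf
    set g : ℕ → Bool := fun k => if k ∈ I then f k else true with hg
    have hgD : g ∈ D N := by
      refine interior_subset (hpi ?_)
      intro a ha
      simp only [hg]
      rw [if_pos (Finset.mem_coe.mp ha)]
      exact (hu a ha).2
    set n := N + I.sup Nat.succ with hn
    obtain ⟨k, hkI, hkfalse⟩ := hgD n (by omega)
    have hkn : n ≤ k := le_trans (P.mono.le_apply) hkI.1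
    have : k ∉ I := by
      intro hkmem
      have := Finset.le_sup (f := Nat.succ) hkmem
      omega
    simp [hg, if_neg this] at hkfalse
    exact this hkfalse.1
  rw [MeagerSet, isMeagre_iff_countable_union_isNowhereDense]
  refine ⟨Set.range D, ?_, Set.countable_range D, ?_⟩
  · rintro _ ⟨N, rfl⟩
    rw [IsNowhereDense, (hclosed N).closure_eq]
    exact hint N
  · rintro _ ⟨x, hx, rfl⟩
    rw [Set.sUnion_range]
    obtain ⟨b, hb⟩ := (h x hx).bddAbove
    refine Set.mem_iUnion.mpr ⟨b + 1, fun n hn => ?_⟩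
    have hnmem : ¬ P.I n ⊆ x := by
      intro hmem
      exact absurd (hb hmem) (by omega)
    obtain ⟨k, hkI, hkx⟩ := Set.not_subset.mp hnmem
    exact ⟨k, hkI, by simp [chi, hkx]⟩

lemma exists_partition_of_meager {Z : Set (Set ℕ)} (hd : DownClosed Z) (hm : MeagerSet Z) :
    ∃ P : IntervalPartition, ∀ z ∈ Z, {n | P.I n ⊆ z}.Finite := by
  classical
  by_contra hcon
  push_neg at hcon
  rw [MeagerSet, isMeagre_iff_countable_union_isNowhereDense] at hm
  obtain ⟨S, hS1, hS2, hS3⟩ := hm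
  obtain ⟨z0, hz0, -⟩ := hcon ⟨id, rfl, strictMono_id⟩
  have hSne : S.Nonempty := by
    obtain ⟨s, hs, -⟩ := hS3 ⟨z0, hz0, rfl⟩
    exact ⟨s, hs⟩
  obtain ⟨fS, rfl⟩ := hS2.exists_eq_range hSne
  set F : ℕ → Set (ℕ → Bool) := fun i => closure (fS i) with hF
  have hFc : ∀ i, IsClosed (F i) := fun i => isClosed_closure
  have hFi : ∀ i, interior (F i) = ∅ := fun i => hS1 (fS i) ⟨i, rfl⟩
  set G : ℕ → Set (ℕ → Bool) := fun n => ⋃ i ∈ Finset.range (n + 1), F i with hG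
  have hGc : ∀ n, IsClosed (G n) := fun n => isClosed_biUnion_finset fun i _ => hFc i
  have hGi : ∀ n, interior (G n) = ∅ := by
    intro n
    induction n with
    | zero => simpa [hG] using hFi 0
    | succ n ih =>
      have hstep : G (n + 1) = G n ∪ F (n + 1) := by
        simp only [hG]
        rw [Finset.range_add_one, Finset.set_biUnion_insert]
        exact Set.union_comm _ _
      rw [hstep]
      exact closed_nwd_union (hGc n) ih (hFi (n + 1))
  have hFG : ∀ i n, i ≤ n → F i ⊆ G n := fun i n hin =>
    Set.subset_biUnion_of_mem (Finset.mem_range.mpr (by omega))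
  have key : ∀ n N (t : ℕ → Bool), ∃ M, ∃ t', N < M ∧ (∀ k < N, t' k = t k) ∧
      cylSet M t' ∩ G n = ∅ := fun n N t => exists_avoid (hGc n) (hGi n) N t
  choose Mf Tf hMlt hTagree hTdis using key
  set bound : ℕ → ℕ → ℕ := fun n N =>
    (Finset.univ : Finset (Fin N → Bool)).sup
      (fun v => Mf n N (fun k => if h : k < N then v ⟨k, h⟩ else false)) with hbd
  have hbound : ∀ n N (t : ℕ → Bool), (∀ k, N ≤ k → t k = false) → Mf n N t ≤ bound n N := by
    intro n N t ht
    have heq : t = fun k => if h : k < N then (fun i : Fin N => t i) ⟨k, h⟩ else false := by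
      funext k
      by_cases h : k < N
      · simp [h]
      · simp [h, ht k (by omega)]
    rw [heq]
    exact Finset.le_sup (f := fun v : Fin N → Bool =>
      Mf n N (fun k => if h : k < N then v ⟨k, h⟩ else false))
      (Finset.mem_univ (fun i : Fin N => t i))
  have hboundgt : ∀ n N, N < bound n N := by
    intro n N
    have h1 := hMlt n N (fun _ => false)
    have h2 := hbound n N (fun _ => false) (fun _ _ => rfl)
    omega
  set e : ℕ → ℕ := fun n => Nat.rec 0 (fun m prev => bound m prev) n with he
  have he0 : e 0 = 0 := rfl
  have heS : ∀ n, e (n + 1) = bound n (e n) := fun n => rfl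
  have hemono : StrictMono e :=
    strictMono_nat_of_lt_succ (fun n => by rw [heS]; exact hboundgt n (e n))
  obtain ⟨x, hxZ, hxinf⟩ := hcon ⟨e, he0, hemono⟩
  set p : ℕ → Prop := fun n => Set.Ico (e n) (e (n + 1)) ⊆ x with hp
  have hpinf : (setOf p).Infinite := hxinf
  set u : ℕ → ℕ → Bool := fun n => Nat.rec (fun _ => false) (fun m prev =>
    if p m then
      (if Even (Nat.count p m) then
        (fun k => if k < e m then prev k else if k < e (m + 1) then true else false)
      else
        (fun k => if k < Mf m (e m) prev then Tf m (e m) prev k else false))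
    else prev) n with hu
  have hu0 : u 0 = fun _ => false := rfl
  have huS : ∀ n, u (n + 1) = if p n then
      (if Even (Nat.count p n) then
        (fun k => if k < e n then u n k else if k < e (n + 1) then true else false)
      else
        (fun k => if k < Mf n (e n) (u n) then Tf n (e n) (u n) k else false))
    else u n := fun n => rfl
  have hMleE : ∀ n, (∀ k, e n ≤ k → u n k = false) → Mf n (e n) (u n) ≤ e (n + 1) := by
    intro n h
    rw [heS]
    exact hbound n (e n) (u n) h
  have inv1 : ∀ n, ∀ k, e n ≤ k → u n k = false := by
    intro n
    induction n with
    | zero => intro k hk; rw [hu0]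
    | succ n ih =>
      intro k hk
      have hM := hMleE n ih
      have hk' : e n ≤ k := le_trans (hemono (Nat.lt_succ_self n)).le hk
      rw [huS n]
      by_cases hpn : p n
      · by_cases hev : Even (Nat.count p n)
        · simp only [if_pos hpn, if_pos hev]
          rw [if_neg (by omega), if_neg (by omega)]
        · simp only [if_pos hpn, if_neg hev]
          rw [if_neg (by omega)]
      · simp only [if_neg hpn]
        exact ih k hk'
  have inv2 : ∀ n k, k < e n → u (n + 1) k = u n k := by
    intro n k hk
    rw [huS n]
    by_cases hpn : p n
    · by_cases hev : Even (Nat.count p n)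
      · simp only [if_pos hpn, if_pos hev]
        rw [if_pos hk]
      · simp only [if_pos hpn, if_neg hev]
        have hlt : k < Mf n (e n) (u n) := lt_of_lt_of_le hk (hMlt n (e n) (u n)).le
        rw [if_pos hlt]
        exact hTagree n (e n) (u n) k hk
    · simp only [if_neg hpn]
  have inv2' : ∀ n m, n ≤ m → ∀ k, k < e n → u m k = u n k := by
    intro n m hnm
    induction m, hnm using Nat.le_induction with
    | base => intro k hk; rfl
    | succ m hm ih =>
      intro k hk
      rw [inv2 m k (lt_of_lt_of_le hk (hemono.monotone hm)), ih k hk]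
  have inv3 : ∀ n k, u n k = true → k ∈ x := by
    intro n
    induction n with
    | zero => intro k hk; rw [hu0] at hk; exact absurd hk (by simp)
    | succ n ih =>
      intro k hk
      rw [huS n] at hk
      by_cases hpn : p n
      · by_cases hev : Even (Nat.count p n)
        · simp only [if_pos hpn, if_pos hev] at hk
          by_cases h1 : k < e n
          · rw [if_pos h1] at hk; exact ih k hk
          · rw [if_neg h1] at hk
            by_cases h2 : k < e (n + 1)
            · exact hpn ⟨le_of_not_gt h1, h2⟩
            · rw [if_neg h2] at hk; exact absurd hk (by simp)
        · simp only [if_pos hpn, if_neg hev] at hk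
          have hM := hMleE n (inv1 n)
          by_cases h1 : k < Mf n (e n) (u n)
          · rw [if_pos h1] at hk
            by_cases h2 : k < e n
            · rw [hTagree n (e n) (u n) k h2] at hk; exact ih k hk
            · exact hpn ⟨le_of_not_gt h2, (by omega : k < e (n + 1))⟩
          · rw [if_neg h1] at hk; exact absurd hk (by simp)
      · simp only [if_neg hpn] at hk
        exact ih k hk
  set g : ℕ → Bool := fun k => u (k + 1) k with hgdef
  have hg : ∀ n k, k < e n → g k = u n k := by
    intro n k hk
    rcases le_total n (k + 1) with h | h
    · exact inv2' n (k + 1) h k hk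
    · exact (inv2' (k + 1) n h k (lt_of_lt_of_le (Nat.lt_succ_self k) hemono.le_apply)).symm
  set y : Set ℕ := {k | g k = true} with hy
  have hchi : chi y = g := by
    funext k
    cases hgk : g k with
    | true => exact chi_eq_true.mpr hgk
    | false =>
      rw [← Bool.not_eq_true]
      intro hc
      have hky : g k = true := chi_eq_true.mp hc
      rw [hgk] at hky
      exact Bool.false_ne_true hky
  have hmem_even : ∀ j, e (Nat.nth p (2 * j)) ∈ y := by
    intro j
    set n := Nat.nth p (2 * j) with hn
    have hpn : p n := Nat.nth_mem_of_infinite hpinf _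
    have hcnt : Nat.count p n = 2 * j := Nat.count_nth (fun hf => absurd hf hpinf)
    have hev : Even (Nat.count p n) := by rw [hcnt]; exact even_two_mul j
    have h1 : u (n + 1) (e n) = true := by
      rw [huS n]
      simp only [if_pos hpn, if_pos hev]
      rw [if_neg (lt_irrefl _), if_pos (hemono (Nat.lt_succ_self n))]
    have h2 : g (e n) = u (n + 1) (e n) := hg (n + 1) (e n) (hemono (Nat.lt_succ_self n))
    show g (e n) = true
    rw [h2, h1]
  have hyinf : y.Infinite := by
    apply infinite_of_unbounded
    intro N
    refine ⟨e (Nat.nth p (2 * N)), hmem_even N, ?_⟩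
    calc N ≤ 2 * N := by omega
    _ ≤ Nat.nth p (2 * N) := (Nat.nth_strictMono hpinf).le_apply
    _ ≤ e (Nat.nth p (2 * N)) := hemono.le_apply
  have hyx : y ⊆ x := fun k hk => inv3 (k + 1) k hk
  have hyZ : y ∈ Z :=
    hd x hxZ y hyinf (by rw [Set.diff_eq_empty.mpr hyx]; exact Set.finite_empty)
  obtain ⟨s, hsS, hys⟩ := hS3 ⟨y, hyZ, rfl⟩
  obtain ⟨i, rfl⟩ := hsS
  have hyF : chi y ∈ F i := subset_closure hys
  set n := Nat.nth p (2 * i + 1) with hn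
  have hpn : p n := Nat.nth_mem_of_infinite hpinf _
  have hcnt : Nat.count p n = 2 * i + 1 := Nat.count_nth (fun hf => absurd hf hpinf)
  have hodd : ¬ Even (Nat.count p n) := by rw [hcnt, Nat.even_iff]; omega
  have hin : i ≤ n := by
    have h := (Nat.nth_strictMono hpinf).le_apply (x := 2 * i + 1)
    omega
  have hM := hMleE n (inv1 n)
  have hcyl : chi y ∈ cylSet (Mf n (e n) (u n)) (Tf n (e n) (u n)) := by
    intro k hk
    rw [hchi]
    have hke : k < e (n + 1) := lt_of_lt_of_le hk hM
    rw [hg (n + 1) k hke, huS n]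
    simp only [if_pos hpn, if_neg hodd]
    rw [if_pos hk]
  have hmemint : chi y ∈ cylSet (Mf n (e n) (u n)) (Tf n (e n) (u n)) ∩ G n :=
    ⟨hcyl, hFG i n hin hyF⟩
  rw [hTdis n (e n) (u n)] at hmemint
  exact hmemint
end AuxPrime

/-- The meager sets form a prime ideal in the lattice of downward-closed subsets of `[ω]^ω`. -/
theorem stmt3 (X Y : Set (Set ℕ)) (hX : X ⊆ InfSets) (hY : Y ⊆ InfSets)
    (hdX : DownClosed X) (hdY : DownClosed Y) (h : MeagerSet (X ∩ Y)) :
    MeagerSet X ∨ MeagerSet Y := by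
  classical
  by_contra hcon
  push_neg at hcon
  obtain ⟨hnX, hnY⟩ := hcon
  have hdXY : DownClosed (X ∩ Y) := fun z hz w hwi hwd =>
    ⟨hdX z hz.1 w hwi hwd, hdY z hz.2 w hwi hwd⟩
  obtain ⟨P, hP⟩ := exists_partition_of_meager hdXY h
  have hXex : ∃ x ∈ X, {n | P.I n ⊆ x}.Infinite := by
    by_contra hc
    push_neg at hc
    exact hnX (meagerSet_of_finite_intervals P fun x hx => hc x hx)
  obtain ⟨x, hxX, hA⟩ := hXex
  have hpick : ∀ N : ℕ, ∃ n, P.I n ⊆ x ∧ N ≤ P.e n := by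
    intro N
    obtain ⟨n, hn, hNn⟩ := hA.exists_gt N
    exact ⟨n, hn, le_trans hNn.le P.mono.le_apply⟩
  choose pick hpickA hpickLe using hpick
  set eq : ℕ → ℕ := fun m => Nat.rec 0 (fun _ prev => P.e (pick prev + 1)) m with heq
  have heq0 : eq 0 = 0 := rfl
  have heqS : ∀ m, eq (m + 1) = P.e (pick (eq m) + 1) := fun _ => rfl
  have hstep : ∀ m, eq m < eq (m + 1) := by
    intro m
    rw [heqS]
    calc eq m ≤ P.e (pick (eq m)) := hpickLe (eq m)
    _ < P.e (pick (eq m) + 1) := P.mono (Nat.lt_succ_self _)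
  have heqmono : StrictMono eq := strictMono_nat_of_lt_succ hstep
  set Q : IntervalPartition := ⟨eq, heq0, heqmono⟩ with hQ
  have hYex : ∃ y ∈ Y, {m | Q.I m ⊆ y}.Infinite := by
    by_contra hc
    push_neg at hc
    exact hnY (meagerSet_of_finite_intervals Q fun y hy => hc y hy)
  obtain ⟨y, hyY, hB⟩ := hYex
  set B := {m | Q.I m ⊆ y} with hBdef
  set nsel : ℕ → ℕ := fun m => pick (eq m) with hnsel
  have hPQ : ∀ m, P.I (nsel m) ⊆ Q.I m := by
    intro m k hk
    rw [IntervalPartition.I, Set.mem_Ico] at hk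
    refine Set.mem_Ico.mpr ⟨le_trans (hpickLe (eq m)) hk.1, ?_⟩
    show k < eq (m + 1)
    rw [heqS m]
    exact hk.2
  set w : Set ℕ := ⋃ m ∈ B, P.I (nsel m) with hw
  have hwx : w ⊆ x := by
    intro k hk
    obtain ⟨m, hm, hkm⟩ := Set.mem_iUnion₂.mp hk
    exact hpickA (eq m) hkm
  have hwy : w ⊆ y := by
    intro k hk
    obtain ⟨m, hm, hkm⟩ := Set.mem_iUnion₂.mp hk
    exact hm (hPQ m hkm)
  have hwinf : w.Infinite := by
    apply infinite_of_unbounded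
    intro N
    obtain ⟨m, hmB, hNm⟩ := hB.exists_gt N
    refine ⟨P.e (nsel m), Set.mem_biUnion hmB (interval_nonempty P (nsel m)), ?_⟩
    calc N ≤ m := hNm.le
    _ ≤ eq m := heqmono.le_apply
    _ ≤ P.e (nsel m) := hpickLe (eq m)
  have hwXY : w ∈ X ∩ Y :=
    ⟨hdX x hxX w hwinf (by rw [Set.diff_eq_empty.mpr hwx]; exact Set.finite_empty),
     hdY y hyY w hwinf (by rw [Set.diff_eq_empty.mpr hwy]; exact Set.finite_empty)⟩
  have hfin := hP w hwXY
  have hnselmono : StrictMono nsel := by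
    intro m m' hmm
    have h1 : P.e (nsel m) < eq (m + 1) := by rw [heqS]; exact P.mono (Nat.lt_succ_self _)
    have h2 : eq (m + 1) ≤ eq m' := heqmono.monotone (Nat.succ_le_of_lt hmm)
    have h3 : eq m' ≤ P.e (nsel m') := hpickLe (eq m')
    exact P.mono.lt_iff_lt.mp (by omega)
  have hinf2 : {n | P.I n ⊆ w}.Infinite := by
    apply infinite_of_unbounded
    intro N
    obtain ⟨m, hmB, hNm⟩ := hB.exists_gt N
    refine ⟨nsel m, ?_, le_trans hNm.le hnselmono.le_apply⟩
    exact Set.subset_biUnion_of_mem (u := fun m => P.I (nsel m)) hmB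
  exact hinf2 hfin
end

section
/- Let G ⊆ [ω]^ω be groupwise dense and let (I_n)_{n∈ω} be an interval partition of ω. Then the set H = {x ∈ [ω]^ω : ⋃_{n∈x} I_n ∈ G} is groupwise dense. -/
open Set Cardinal MeasureTheory

lemma biUnion_Ico_eq (e : ℕ → ℕ) (he : Monotone e) (a b : ℕ) (hab : a ≤ b) :
    ⋃ m ∈ Set.Ico a b, Set.Ico (e m) (e (m + 1)) = Set.Ico (e a) (e b) := by
  induction b, hab using Nat.le_induction with
  | base => simp
  | succ b hb ih =>
    have hIco : Set.Ico a (b + 1) = Set.Ico a b ∪ {b} := by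
      ext k; simp only [Set.mem_Ico, Set.mem_union, Set.mem_singleton_iff]; omega
    rw [hIco, Set.biUnion_union, ih, Set.biUnion_singleton,
      Set.Ico_union_Ico_eq_Ico (he hb) (he (Nat.le_succ b))]

lemma biUnion_I_infinite (P : IntervalPartition) {x : Set ℕ} (hx : x.Infinite) :
    (⋃ n ∈ x, P.I n).Infinite := by
  refine Set.Infinite.mono ?_ (hx.image (Set.injOn_of_injective P.mono.injective))
  rintro k ⟨n, hn, rfl⟩
  exact Set.mem_biUnion hn ⟨le_rfl, P.mono (Nat.lt_succ_self n)⟩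

/-- If `G` is groupwise dense and `(I n)` is an interval partition, then
`H = {x ∈ [ω]^ω : ⋃_{n ∈ x} I n ∈ G}` is groupwise dense. -/
theorem stmt4 (G : Set (Set ℕ)) (hG : GroupwiseDense G) (P : IntervalPartition) :
    GroupwiseDense {x : Set ℕ | x.Infinite ∧ (⋃ n ∈ x, P.I n) ∈ G} := by
  obtain ⟨hGinf, hGdc, hGgw⟩ := hG
  refine ⟨fun x hx => hx.1, ?_, ?_⟩
  · rintro y ⟨hyinf, hyG⟩ x hxinf hxy
    refine ⟨hxinf, hGdc _ hyG _ (biUnion_I_infinite P hxinf) ?_⟩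
    have hsub : (⋃ n ∈ x, P.I n) \ (⋃ n ∈ y, P.I n) ⊆ ⋃ n ∈ x \ y, P.I n := by
      rintro k ⟨hk1, hk2⟩
      obtain ⟨n, hn, hkn⟩ := Set.mem_iUnion₂.mp hk1
      refine Set.mem_biUnion ⟨hn, fun hny => hk2 (Set.mem_biUnion hny hkn)⟩ hkn
    exact (hxy.biUnion (fun n _ => Set.finite_Ico _ _)).subset hsub
  · intro Q
    set R : IntervalPartition :=
      ⟨fun k => P.e (Q.e k), by simp [P.zero, Q.zero], P.mono.comp Q.mono⟩ with hR
    obtain ⟨A, hAinf, hAG⟩ := hGgw R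
    refine ⟨A, hAinf, biUnion_I_infinite Q hAinf, ?_⟩
    have key : (⋃ m ∈ ⋃ n ∈ A, Q.I n, P.I m) = ⋃ n ∈ A, R.I n := by
      rw [Set.biUnion_iUnion]
      refine Set.iUnion_congr fun n => ?_
      rw [Set.biUnion_iUnion]
      refine Set.iUnion_congr fun hn => ?_
      exact biUnion_Ico_eq P.e P.mono.monotone _ _ (Q.mono (Nat.lt_succ_self n)).le
    rw [key]; exact hAG
end
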